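/- Jittered second-difference bound: let g : ℝ → ℝ be twice continuously differentiable with ‖g'‖_∞ ≤ Ω‖g‖_∞ and ‖g''‖_∞ ≤ Ω²‖g‖_∞. Let t_k = kT + μ_k with |μ_k| ≤ νT for all k, and γ[k] = g(t_k). Then for all k, |γ[k] + γ[k+2] - 2γ[k+1]| ≤ ((TΩ)² + 4νTΩ)·‖g‖_∞. -/

import Mathlib

lemma lip_aux {f : ℝ → ℝ} {C : ℝ} (hf : Differentiable ℝ f)
    (hC : ∀ x, |deriv f x| ≤ C) (a b : ℝ) : |f b - f a| ≤ C * |b - a| := by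
  have := Convex.norm_image_sub_le_of_norm_deriv_le (f := f) (C := C)
    (fun x _ => hf x) (fun x _ => hC x) convex_univ (Set.mem_univ a) (Set.mem_univ b)
  simpa [Real.norm_eq_abs] using this

theorem jittered_second_difference_bound
    (g : ℝ → ℝ) (hg : ContDiff ℝ 2 g)
    (Ω Bg T ν : ℝ) (hΩ : 0 < Ω) (hT : 0 < T) (hν : 0 ≤ ν)
    (hBg : ∀ t : ℝ, |g t| ≤ Bg)
    (hBern1 : ∀ t : ℝ, |deriv g t| ≤ Ω * Bg)
    (hBern2 : ∀ t : ℝ, |iteratedDeriv 2 g t| ≤ Ω ^ 2 * Bg)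
    (μ : ℤ → ℝ) (hμ : ∀ k : ℤ, |μ k| ≤ ν * T)
    (t : ℤ → ℝ) (ht : ∀ k : ℤ, t k = k * T + μ k)
    (γ : ℤ → ℝ) (hγ : ∀ k : ℤ, γ k = g (t k)) :
    ∀ k : ℤ, |γ k + γ (k + 2) - 2 * γ (k + 1)| ≤
      ((T * Ω) ^ 2 + 4 * ν * T * Ω) * Bg := by
  have hBg0 : 0 ≤ Bg := le_trans (abs_nonneg _) (hBg 0)
  have hgd : Differentiable ℝ g := hg.differentiable (by norm_num)
  have hg' : ContDiff ℝ (1 + 1) g := by norm_num; exact hg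
  have hdg : ContDiff ℝ 1 (deriv g) := (contDiff_succ_iff_deriv.mp hg').2.2
  have hdgd : Differentiable ℝ (deriv g) := hdg.differentiable (by norm_num)
  have hdd : ∀ x, |deriv (deriv g) x| ≤ Ω ^ 2 * Bg := by
    intro x
    have : iteratedDeriv 2 g = deriv (deriv g) := by
      rw [iteratedDeriv_succ, iteratedDeriv_one]
    simpa [this] using hBern2 x
  -- Lipschitz bounds
  have lipg : ∀ a b : ℝ, |g b - g a| ≤ Ω * Bg * |b - a| :=
    lip_aux hgd hBern1
  have lipdg : ∀ a b : ℝ, |deriv g b - deriv g a| ≤ Ω ^ 2 * Bg * |b - a| :=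
    lip_aux hdgd hdd
  -- the shifted-difference function
  set F : ℝ → ℝ := fun x => g (x + T) - g x with hF
  have hFderiv : ∀ x : ℝ, HasDerivAt F (deriv g (x + T) - deriv g x) x := by
    intro x
    have h1 : HasDerivAt (fun x : ℝ => g (x + T)) (deriv g (x + T)) x := by
      have := ((hgd (x + T)).hasDerivAt).comp x ((hasDerivAt_id x).add_const T)
      rw [mul_one] at this
      exact this
    exact h1.sub (hgd x).hasDerivAt
  have hFd : Differentiable ℝ F := fun x => (hFderiv x).differentiableAt
  have hFderiv' : ∀ x, deriv F x = deriv g (x + T) - deriv g x := fun x =>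
    (hFderiv x).deriv
  have hFC : ∀ x, |deriv F x| ≤ Ω ^ 2 * Bg * T := by
    intro x
    rw [hFderiv' x]
    have := lipdg x (x + T)
    simpa [abs_of_pos hT] using this
  have lipF : ∀ a b : ℝ, |F b - F a| ≤ Ω ^ 2 * Bg * T * |b - a| :=
    lip_aux hFd hFC
  intro k
  set a : ℝ := (k : ℝ) * T with ha
  have ht0 : t k = a + μ k := by rw [ht]
  have ht1 : t (k + 1) = a + T + μ (k + 1) := by rw [ht]; push_cast; ring
  have ht2 : t (k + 2) = a + 2 * T + μ (k + 2) := by rw [ht]; push_cast; ring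
  have hD : |g a + g (a + 2 * T) - 2 * g (a + T)| ≤ Ω ^ 2 * Bg * T * T := by
    have := lipF a (a + T)
    have h2 : F (a + T) - F a = g a + g (a + 2 * T) - 2 * g (a + T) := by
      simp only [hF]; ring_nf
    rw [h2] at this
    simpa [abs_of_pos hT] using this
  have hE : ∀ (j : ℤ) (b : ℝ), t j = b + μ j → |g (t j) - g b| ≤ Ω * Bg * (ν * T) := by
    intro j b hj
    have := lipg b (t j)
    have h1 : |t j - b| ≤ ν * T := by rw [hj]; simpa using hμ j
    calc |g (t j) - g b| ≤ Ω * Bg * |t j - b| := this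
      _ ≤ Ω * Bg * (ν * T) := by
        exact mul_le_mul_of_nonneg_left h1 (by positivity)
  have e0 := hE k a ht0
  have e1 := hE (k + 1) (a + T) ht1
  have e2 := hE (k + 2) (a + 2 * T) ht2
  have key : γ k + γ (k + 2) - 2 * γ (k + 1)
      = (g a + g (a + 2 * T) - 2 * g (a + T))
        + (g (t k) - g a) + (g (t (k + 2)) - g (a + 2 * T))
        - 2 * (g (t (k + 1)) - g (a + T)) := by
    rw [hγ, hγ, hγ]; ring
  rw [key]
  have hsum : |(g a + g (a + 2 * T) - 2 * g (a + T))
        + (g (t k) - g a) + (g (t (k + 2)) - g (a + 2 * T))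
        - 2 * (g (t (k + 1)) - g (a + T))|
      ≤ Ω ^ 2 * Bg * T * T + Ω * Bg * (ν * T) + Ω * Bg * (ν * T)
        + 2 * (Ω * Bg * (ν * T)) := by
    calc _ ≤ |(g a + g (a + 2 * T) - 2 * g (a + T))
        + (g (t k) - g a) + (g (t (k + 2)) - g (a + 2 * T))|
        + |2 * (g (t (k + 1)) - g (a + T))| := abs_sub _ _
      _ ≤ |(g a + g (a + 2 * T) - 2 * g (a + T)) + (g (t k) - g a)|
          + |g (t (k + 2)) - g (a + 2 * T)| + |2 * (g (t (k + 1)) - g (a + T))| := by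
        gcongr; exact abs_add_le _ _
      _ ≤ |g a + g (a + 2 * T) - 2 * g (a + T)| + |g (t k) - g a|
          + |g (t (k + 2)) - g (a + 2 * T)| + |2 * (g (t (k + 1)) - g (a + T))| := by
        gcongr; exact abs_add_le _ _
      _ ≤ _ := by
        rw [abs_mul (2 : ℝ)]
        have h2 : |(2:ℝ)| = 2 := by norm_num
        rw [h2]
        gcongr
  refine hsum.trans (le_of_eq ?_)
  ring
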